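/- Let 0 < q < 1, ā < 0, b̄ > 0, and let α ∈ ℝ satisfy ā + b̄ q^α = 0. If p : [0,∞) → [0,∞) is continuous with 0 < p(0) and satisfies the differential inequality D⁺p(t) ≤ ā p(t) + b̄ p(qt) for all t ≥ 0 (D⁺ the upper Dini derivative), then there exists a constant C > 0 such that p(t) ≤ C p(0) t^α for all t ≥ 1. -/
import Mathlib

open Filter Topology

/-- Upper (right) Dini derivative: `D⁺h(t) = limsup_{δ→0⁺} (h(t+δ)-h(t))/δ`. -/
noncomputable def DiniUpper (h : ℝ → ℝ) (t : ℝ) : ℝ :=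
  Filter.limsup (fun δ => (h (t + δ) - h t) / δ) (nhdsWithin 0 (Set.Ioi 0))

/-- If the right slopes of `h` at `c` are frequently `≥ r`, then either the Dini
upper derivative is the junk value `0` (empty bound set) or it is `≥ r`. -/
lemma freq_slope_le_DiniUpper (h : ℝ → ℝ) (c r : ℝ)
    (hf : ∃ᶠ δ in 𝓝[>] (0:ℝ), r ≤ (h (c + δ) - h c) / δ) :
    DiniUpper h c = 0 ∨ r ≤ DiniUpper h c := by
  set S : Set ℝ := {a | ∀ᶠ δ in 𝓝[>] (0:ℝ), (h (c + δ) - h c) / δ ≤ a} with hS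
  have hlim : DiniUpper h c = sInf S := limsup_eq
  rcases S.eq_empty_or_nonempty with hE | hNE
  · left; rw [hlim, hE]; exact Real.sInf_empty
  · right
    rw [hlim]
    refine le_csInf hNE ?_
    intro b hb
    obtain ⟨δ, hδ1, hδ2⟩ := (hf.and_eventually hb).exists
    linarith

/-- Comparison lemma: if `p ≤ B` on the base interval `[T₀, T]`, and at any
touching point `c ≥ T` (with `p ≤ B` up to `c`) the Dini derivative of `p`
is both negative and `< B'(c)`, then `p ≤ B` on `[T, ∞)`. -/
lemma comparison_lemma (p B : ℝ → ℝ) (T₀ T : ℝ) (hT : T₀ ≤ T)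
    (contp : ContinuousOn p (Set.Ici T₀))
    (contB : ContinuousOn B (Set.Ici T₀))
    (hbase : ∀ t ∈ Set.Icc T₀ T, p t ≤ B t)
    (hkey : ∀ c, T ≤ c → p c = B c → (∀ t ∈ Set.Icc T₀ c, p t ≤ B t) →
      ∃ B', HasDerivAt B B' c ∧ DiniUpper p c < B' ∧ DiniUpper p c < 0) :
    ∀ t, T ≤ t → p t ≤ B t := by
  by_contra hbad
  push_neg at hbad
  obtain ⟨t1, ht1T, ht1⟩ := hbad
  set bad : Set ℝ := {t | T ≤ t ∧ B t < p t} with hbadset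
  have hne : bad.Nonempty := ⟨t1, ht1T, ht1⟩
  have hbdd : BddBelow bad := ⟨T, fun x hx => hx.1⟩
  set c := sInf bad with hc
  have hTc : T ≤ c := le_csInf hne (fun x hx => hx.1)
  have hT₀c : T₀ ≤ c := le_trans hT hTc
  -- every point in [T, c) is good
  have hgood : ∀ t, T ≤ t → t < c → p t ≤ B t := by
    intro t htT htc
    by_contra hpt
    push_neg at hpt
    exact absurd (csInf_le hbdd ⟨htT, hpt⟩) (not_le.2 htc)
  -- p c ≤ B c
  have hpcle : p c ≤ B c := by
    by_contra hpc
    push_neg at hpc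
    rcases eq_or_lt_of_le hTc with hEq | hLt
    · exact absurd (hbase c ⟨hT₀c, hEq.symm.le⟩) (not_le.2 hpc)
    · -- continuity: p - B > 0 in a neighbourhood of c
      have hcont : ContinuousAt (fun z => p z - B z) c := by
        have h1 : ContinuousWithinAt p (Set.Ici T₀) c := contp c (le_of_lt (lt_of_le_of_lt hT hLt))
        have h2 : ContinuousWithinAt B (Set.Ici T₀) c := contB c (le_of_lt (lt_of_le_of_lt hT hLt))
        have hmem : Set.Ici T₀ ∈ 𝓝 c := Ici_mem_nhds (lt_of_le_of_lt hT hLt)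
        have := (h1.sub h2)
        exact this.continuousAt hmem
      have hpos : (0:ℝ) < p c - B c := by linarith
      have hev : ∀ᶠ z in 𝓝 c, 0 < p z - B z := hcont.eventually_const_lt hpos
      rw [Metric.eventually_nhds_iff] at hev
      obtain ⟨ε, hε, hball⟩ := hev
      set t := max T (c - ε/2) with htdef
      have htT : T ≤ t := le_max_left _ _
      have htc : t < c := by
        rcases max_cases T (c - ε/2) with ⟨h1, _⟩ | ⟨h1, _⟩ <;> rw [htdef, h1] <;> linarith
      have hdist : dist t c < ε := by
        rw [Real.dist_eq, abs_sub_lt_iff]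
        constructor
        · linarith
        · have : c - ε/2 ≤ t := le_max_right _ _
          linarith
      have := hball hdist
      exact absurd (hgood t htT htc) (not_le.2 (by linarith))
  -- frequently bad just to the right of c, in δ-form
  have hfreq : ∃ᶠ δ in 𝓝[>] (0:ℝ), B (c + δ) < p (c + δ) := by
    rw [frequently_iff]
    intro U hU
    obtain ⟨u, hu, hsub⟩ := mem_nhdsGT_iff_exists_Ioo_subset.1 hU
    obtain ⟨z, hz, hzlt⟩ := exists_lt_of_csInf_lt hne (show sInf bad < c + u by
      simp only [← hc]; linarith [Set.mem_Ioi.1 hu])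
    have hzc : c ≤ z := csInf_le hbdd hz
    have hzne : z ≠ c := by
      intro h; rw [h] at hz; exact absurd hz.2 (not_lt.2 hpcle)
    refine ⟨z - c, hsub ⟨by cases lt_or_eq_of_le hzc with
      | inl h => linarith
      | inr h => exact absurd h.symm hzne, by linarith⟩, ?_⟩
    have : c + (z - c) = z := by ring
    rw [this]; exact hz.2
  -- p c = B c
  have hpceq : p c = B c := by
    refine le_antisymm hpcle ?_
    by_contra hlt
    push_neg at hlt
    have htendsto : Tendsto (fun δ => p (c + δ) - B (c + δ)) (𝓝[>] (0:ℝ)) (𝓝 (p c - B c)) := by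
      have hmap : Tendsto (fun δ : ℝ => c + δ) (𝓝[>] (0:ℝ)) (𝓝[Set.Ici T₀] c) := by
        rw [tendsto_nhdsWithin_iff]
        constructor
        · have : Tendsto (fun δ : ℝ => c + δ) (𝓝 (0:ℝ)) (𝓝 (c + 0)) :=
            (continuous_const.add continuous_id).tendsto 0
          rw [add_zero] at this
          exact this.mono_left nhdsWithin_le_nhds
        · filter_upwards [eventually_mem_nhdsWithin] with δ hδ
          exact le_trans hT₀c (by simp at hδ; linarith)
      have h1 : ContinuousWithinAt p (Set.Ici T₀) c := contp c hT₀c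
      have h2 : ContinuousWithinAt B (Set.Ici T₀) c := contB c hT₀c
      exact ((h1.sub h2).tendsto).comp hmap
    have hev : ∀ᶠ δ in 𝓝[>] (0:ℝ), p (c + δ) - B (c + δ) < 0 :=
      htendsto.eventually_lt_const (by linarith)
    obtain ⟨δ, h1, h2⟩ := (hfreq.and_eventually hev).exists
    linarith
  -- good up to c inclusive
  have hgood' : ∀ t ∈ Set.Icc T₀ c, p t ≤ B t := by
    intro t ⟨h1, h2⟩
    rcases le_or_gt t T with h | h
    · exact hbase t ⟨h1, h⟩
    · rcases lt_or_eq_of_le h2 with h' | h'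
      · exact hgood t h.le h'
      · rw [h']; exact hpceq.le
  obtain ⟨B', hderiv, hlt1, hlt2⟩ := hkey c hTc hpceq hgood'
  -- slope of B tends to B' along 𝓝[>] 0
  have hmapne : Tendsto (fun δ : ℝ => c + δ) (𝓝[>] (0:ℝ)) (𝓝[≠] c) := by
    rw [tendsto_nhdsWithin_iff]
    constructor
    · have : Tendsto (fun δ : ℝ => c + δ) (𝓝 (0:ℝ)) (𝓝 (c + 0)) :=
        (continuous_const.add continuous_id).tendsto 0
      rw [add_zero] at this
      exact this.mono_left nhdsWithin_le_nhds
    · filter_upwards [eventually_mem_nhdsWithin] with δ hδ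
      have : (0:ℝ) < δ := hδ
      simp only [Set.mem_compl_iff, Set.mem_singleton_iff]
      intro h; rw [add_eq_left] at h; linarith
  have hslopeB : Tendsto (fun δ => (B (c + δ) - B c) / δ) (𝓝[>] (0:ℝ)) (𝓝 B') := by
    have := (hasDerivAt_iff_tendsto_slope.1 hderiv).comp hmapne
    have heq : (fun δ => (B (c + δ) - B c) / δ) = (slope B c) ∘ (fun δ : ℝ => c + δ) := by
      funext δ
      simp [slope_def_field, Function.comp]
    rw [heq]
    exact this
  set r := (B' + DiniUpper p c) / 2 with hr
  have hrlt : r < B' := by rw [hr]; linarith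
  have hrgt : DiniUpper p c < r := by rw [hr]; linarith
  have hevB : ∀ᶠ δ in 𝓝[>] (0:ℝ), r < (B (c + δ) - B c) / δ :=
    hslopeB.eventually_const_lt hrlt
  have hfreq2 : ∃ᶠ δ in 𝓝[>] (0:ℝ), r ≤ (p (c + δ) - p c) / δ := by
    refine (hfreq.and_eventually (hevB.and eventually_mem_nhdsWithin)).mono ?_
    rintro δ ⟨h1, h2, h3⟩
    have hδ : (0:ℝ) < δ := h3
    have : (B (c + δ) - B c) / δ ≤ (p (c + δ) - p c) / δ := by
      rw [hpceq]
      gcongr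
    linarith
  rcases freq_slope_le_DiniUpper p c r hfreq2 with h | h
  · rw [h] at hlt2; exact absurd hlt2 (lt_irrefl 0)
  · linarith

theorem stmt2 (q abar bbar α : ℝ) (hq0 : 0 < q) (hq1 : q < 1)
    (ha : abar < 0) (hb : 0 < bbar) (hα : abar + bbar * q ^ α = 0)
    (p : ℝ → ℝ) (hp_cont : ContinuousOn p (Set.Ici 0))
    (hp_nonneg : ∀ t ≥ (0:ℝ), 0 ≤ p t) (hp0 : 0 < p 0)
    (hD : ∀ t ≥ (0:ℝ), DiniUpper p t ≤ abar * p t + bbar * p (q * t)) :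
    ∃ C > (0:ℝ), ∀ t ≥ (1:ℝ), p t ≤ C * p 0 * t ^ α := by
  have hqne : q ≠ 0 := ne_of_gt hq0
  -- basic exponent facts
  have hqα : q ^ α = q ^ (α - 1) * q := by
    rw [← Real.rpow_add_one hqne (α - 1)]; norm_num
  set c₁ : ℝ := bbar * q ^ (α - 1) * (1 - q) with hc₁def
  have hc₁ : 0 < c₁ := by
    apply mul_pos (mul_pos hb (Real.rpow_pos_of_pos hq0 _)); linarith
  set lam : ℝ := (1 + |α|) / c₁ with hlamdef
  have hlam : 0 < lam := div_pos (by positivity) hc₁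
  have hlamc₁ : lam * c₁ = 1 + |α| := div_mul_cancel₀ _ (ne_of_gt hc₁)
  set T : ℝ := (1 + lam * |α - 1| + lam) / q with hTdef
  have habs1 : 0 ≤ lam * |α - 1| := mul_nonneg hlam.le (abs_nonneg _)
  have hqT : q * T = 1 + lam * |α - 1| + lam := by
    rw [hTdef, mul_div_cancel₀ _ hqne]
  set T₀ : ℝ := q * T with hT₀def
  have hT₀pos : (0:ℝ) < T₀ := by rw [hqT]; linarith
  have hT₀1 : (1:ℝ) ≤ T₀ := by rw [hqT]; linarith
  have hlamT₀ : lam < T₀ := by rw [hqT]; linarith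
  have hTpos : 0 < T := by
    by_contra h
    push_neg at h
    have h2 : q * T ≤ 0 := mul_nonpos_of_nonneg_of_nonpos hq0.le h
    rw [← hT₀def] at h2
    linarith
  have hT₀T : T₀ ≤ T := by
    rw [hT₀def]
    nlinarith [mul_nonneg (sub_nonneg.2 hq1.le) hTpos.le]
  have hqTle : ∀ c : ℝ, 0 ≤ c → q * c ≤ c := by
    intro c hc
    nlinarith [mul_nonneg (sub_nonneg.2 hq1.le) hc]
  clear_value c₁ lam T
  -- the barrier function
  set B₀ : ℝ → ℝ := fun t => t ^ α - lam * t ^ (α - 1) with hB₀def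
  have hB₀fact : ∀ t : ℝ, 0 < t → B₀ t = t ^ (α - 1) * (t - lam) := by
    intro t ht
    have : t ^ α = t ^ (α - 1) * t := by
      rw [← Real.rpow_add_one (ne_of_gt ht) (α - 1)]; norm_num
    rw [hB₀def]; simp only []; rw [this]; ring
  have hB₀pos : ∀ t : ℝ, T₀ ≤ t → 0 < B₀ t := by
    intro t ht
    have htpos : 0 < t := lt_of_lt_of_le hT₀pos ht
    rw [hB₀fact t htpos]
    exact mul_pos (Real.rpow_pos_of_pos htpos _) (by linarith [lt_of_lt_of_le hlamT₀ ht])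
  have hB₀cont : ContinuousOn B₀ (Set.Ici T₀) := by
    intro t ht
    have htne : t ≠ 0 := ne_of_gt (lt_of_lt_of_le hT₀pos ht)
    exact ((Real.continuousAt_rpow_const t α (Or.inl htne)).sub
      ((Real.continuousAt_rpow_const t (α - 1) (Or.inl htne)).const_smul lam)).continuousWithinAt
  clear_value B₀
  -- max of p on [0, T], min of B₀ on [T₀, T]
  obtain ⟨x₀, hx₀mem, hx₀max⟩ := isCompact_Icc.exists_isMaxOn (Set.nonempty_Icc.2 hTpos.le)
    (hp_cont.mono (by intro x hx; exact hx.1))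
  set Mp : ℝ := p x₀ with hMpdef
  have hMp0 : p 0 ≤ Mp := hx₀max ⟨le_refl 0, hTpos.le⟩
  have hMppos : 0 < Mp := lt_of_lt_of_le hp0 hMp0
  obtain ⟨x₁, hx₁mem, hx₁min⟩ := isCompact_Icc.exists_isMinOn (Set.nonempty_Icc.2 hT₀T)
    (hB₀cont.mono (by intro x hx; exact hx.1))
  set mB : ℝ := B₀ x₁ with hmBdef
  have hmBpos : 0 < mB := hB₀pos x₁ hx₁mem.1
  set K : ℝ := max 1 (Mp / mB) with hKdef
  have hK1 : (1:ℝ) ≤ K := le_max_left _ _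
  have hKpos : 0 < K := lt_of_lt_of_le one_pos hK1
  have hKge : Mp / mB ≤ K := le_max_right _ _
  clear_value K
  set B : ℝ → ℝ := fun t => K * B₀ t with hBdef
  clear_value B
  -- base estimate
  have hbase : ∀ t ∈ Set.Icc T₀ T, p t ≤ B t := by
    intro t ⟨h1, h2⟩
    have hpt : p t ≤ Mp := hx₀max ⟨le_trans hT₀pos.le h1, h2⟩
    have hBt : mB ≤ B₀ t := hx₁min ⟨h1, h2⟩
    have hBtpos : 0 < B₀ t := hB₀pos t h1
    calc p t ≤ Mp := hpt
      _ = (Mp / mB) * mB := by field_simp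
      _ ≤ (Mp / mB) * B₀ t := by
          apply mul_le_mul_of_nonneg_left hBt (div_nonneg hMppos.le hmBpos.le)
      _ ≤ K * B₀ t := mul_le_mul_of_nonneg_right hKge hBtpos.le
      _ = B t := by rw [hBdef]
  -- key touching-point estimate
  have hkey : ∀ c, T ≤ c → p c = B c → (∀ t ∈ Set.Icc T₀ c, p t ≤ B t) →
      ∃ B', HasDerivAt B B' c ∧ DiniUpper p c < B' ∧ DiniUpper p c < 0 := by
    intro c hTc hpc hprev
    have hcT₀ : T₀ ≤ c := le_trans hT₀T hTc
    have hcpos : 0 < c := lt_of_lt_of_le hT₀pos hcT₀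
    have hcne : c ≠ 0 := ne_of_gt hcpos
    refine ⟨K * (α * c ^ (α - 1) - lam * ((α - 1) * c ^ (α - 1 - 1))), ?_, ?_, ?_⟩
    · have h1 : HasDerivAt (fun t : ℝ => t ^ α) (α * c ^ (α - 1)) c :=
        Real.hasDerivAt_rpow_const (Or.inl hcne)
      have h2 : HasDerivAt (fun t : ℝ => lam * t ^ (α - 1)) (lam * ((α - 1) * c ^ (α - 1 - 1))) c :=
        (Real.hasDerivAt_rpow_const (Or.inl hcne)).const_mul lam
      simp only [hBdef, hB₀def]
      exact ((h1.sub h2).const_mul K)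
    all_goals {
      -- common computation
      have hqc : T₀ ≤ q * c ∧ q * c ≤ c := by
        constructor
        · rw [hT₀def]; exact mul_le_mul_of_nonneg_left hTc hq0.le
        · exact hqTle c hcpos.le
      have hpqc : p (q * c) ≤ K * B₀ (q * c) := by
        have := hprev (q * c) ⟨hqc.1, hqc.2⟩
        rwa [hBdef] at this
      have hDc : DiniUpper p c ≤ abar * p c + bbar * p (q * c) := hD c (by linarith)
      have hmul1 : (q * c) ^ α = q ^ α * c ^ α := Real.mul_rpow hq0.le hcpos.le
      have hmul2 : (q * c) ^ (α - 1) = q ^ (α - 1) * c ^ (α - 1) := Real.mul_rpow hq0.le hcpos.le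
      have hc₁' : abar + bbar * q ^ (α - 1) = c₁ := by
        have habar : abar = -(bbar * q ^ α) := by linarith
        rw [habar, hqα, hc₁def]; ring
      have hRHS : abar * p c + bbar * p (q * c) ≤ K * (-(lam * c₁ * c ^ (α - 1))) := by
        have step1 : abar * p c + bbar * p (q * c) ≤ abar * (K * B₀ c) + bbar * (K * B₀ (q * c)) := by
          rw [hpc]
          have : bbar * p (q * c) ≤ bbar * (K * B₀ (q * c)) :=
            mul_le_mul_of_nonneg_left hpqc hb.le
          simp only [hBdef]
          linarith
        have step2 : abar * (K * B₀ c) + bbar * (K * B₀ (q * c)) =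
            K * (c ^ α * (abar + bbar * q ^ α) - lam * (c ^ (α - 1) * (abar + bbar * q ^ (α - 1)))) := by
          rw [hB₀def]; simp only []; rw [hmul1, hmul2]; ring
        rw [step2, hα, hc₁'] at step1
        calc abar * p c + bbar * p (q * c) ≤ _ := step1
          _ = K * (-(lam * c₁ * c ^ (α - 1))) := by ring
      have hNneg : K * (-(lam * c₁ * c ^ (α - 1))) < 0 := by
        have h5 : 0 < c ^ (α - 1) := Real.rpow_pos_of_pos hcpos (α - 1)
        have h6 : 0 < lam * c₁ * c ^ (α - 1) := mul_pos (mul_pos hlam hc₁) h5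
        have h7 : 0 < K * (lam * c₁ * c ^ (α - 1)) := mul_pos hKpos h6
        linarith
      have hcα2 : c ^ (α - 1) = c ^ (α - 1 - 1) * c := by
        rw [← Real.rpow_add_one hcne (α - 1 - 1)]; norm_num
      have hupos : 0 < c ^ (α - 1 - 1) := Real.rpow_pos_of_pos hcpos _
      have hNltB' : K * (-(lam * c₁ * c ^ (α - 1))) <
          K * (α * c ^ (α - 1) - lam * ((α - 1) * c ^ (α - 1 - 1))) := by
        have hbracket : 0 < (α + lam * c₁) * c - lam * (α - 1) := by
          have h1 : 1 ≤ α + lam * c₁ := by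
            rw [hlamc₁]
            have := abs_nonneg α
            have := neg_abs_le α
            linarith
          have h2 : lam * (α - 1) ≤ lam * |α - 1| :=
            mul_le_mul_of_nonneg_left (le_abs_self _) hlam.le
          have h3 : T₀ ≤ c := hcT₀
          have h4 : 1 + lam * |α - 1| + lam ≤ c := by rw [← hqT]; exact h3
          linarith [mul_le_mul_of_nonneg_right h1 hcpos.le]
        have expand : K * (α * c ^ (α - 1) - lam * ((α - 1) * c ^ (α - 1 - 1)))
            - K * (-(lam * c₁ * c ^ (α - 1)))
            = K * (c ^ (α - 1 - 1) * ((α + lam * c₁) * c - lam * (α - 1))) := by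
          rw [hcα2]; ring
        linarith [mul_pos hKpos (mul_pos hupos hbracket), expand]
      first
        | exact lt_of_le_of_lt (le_trans hDc hRHS) hNltB'
        | exact lt_of_le_of_lt (le_trans hDc hRHS) hNneg
    }
  -- apply the comparison lemma
  have hcomp : ∀ t, T ≤ t → p t ≤ B t :=
    comparison_lemma p B T₀ T hT₀T (hp_cont.mono (by intro x hx; exact le_trans hT₀pos.le hx))
      (by simp only [hBdef]; exact continuousOn_const.mul hB₀cont)
      hbase hkey
  -- min of t ^ α on [1, T]
  have h1T : (1:ℝ) ≤ T := le_trans hT₀1 hT₀T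
  obtain ⟨x₂, hx₂mem, hx₂min⟩ := isCompact_Icc.exists_isMinOn (Set.nonempty_Icc.2 h1T)
    (by intro t ht
        exact (Real.continuousAt_rpow_const t α
          (Or.inl (ne_of_gt (lt_of_lt_of_le one_pos ht.1)))).continuousWithinAt)
  set mα : ℝ := x₂ ^ α with hmαdef
  have hmαpos : 0 < mα := Real.rpow_pos_of_pos (lt_of_lt_of_le one_pos hx₂mem.1) _
  refine ⟨max K (Mp / mα) / p 0, ?_, ?_⟩
  · apply div_pos (lt_of_lt_of_le one_pos (le_trans hK1 (le_max_left _ _))) hp0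
  · intro t ht
    have hCp0 : max K (Mp / mα) / p 0 * p 0 = max K (Mp / mα) :=
      div_mul_cancel₀ _ (ne_of_gt hp0)
    rw [hCp0]
    have htpos : 0 < t := lt_of_lt_of_le one_pos ht
    have htα : 0 < t ^ α := Real.rpow_pos_of_pos htpos _
    rcases le_or_gt t T with hcase | hcase
    · -- 1 ≤ t ≤ T
      have hpt : p t ≤ Mp := hx₀max ⟨by linarith, hcase⟩
      have hmin : mα ≤ t ^ α := hx₂min ⟨ht, hcase⟩
      calc p t ≤ Mp := hpt
        _ = (Mp / mα) * mα := by field_simp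
        _ ≤ (Mp / mα) * t ^ α :=
            mul_le_mul_of_nonneg_left hmin (div_nonneg hMppos.le hmαpos.le)
        _ ≤ max K (Mp / mα) * t ^ α :=
            mul_le_mul_of_nonneg_right (le_max_right _ _) htα.le
    · -- t > T
      have hBt : B t ≤ K * t ^ α := by
        simp only [hBdef]
        rw [hB₀fact t htpos]
        have h1 : t ^ (α - 1) * (t - lam) ≤ t ^ (α - 1) * t := by
          apply mul_le_mul_of_nonneg_left (by linarith) (Real.rpow_pos_of_pos htpos _).le
        have h2 : t ^ (α - 1) * t = t ^ α := by
          rw [← Real.rpow_add_one (ne_of_gt htpos) (α - 1)]; norm_num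
        rw [← h2]
        exact mul_le_mul_of_nonneg_left h1 hKpos.le
      calc p t ≤ B t := hcomp t hcase.le
        _ ≤ K * t ^ α := hBt
        _ ≤ max K (Mp / mα) * t ^ α :=
            mul_le_mul_of_nonneg_right (le_max_left _ _) htα.le
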